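/- Let X^n, Y^n be finite-alphabet sequences such that P(Y^n = y^n | X^n = x^n) = Π_{i=0}^n q_i(y_i | y^{i-1}, x_i) for kernels depending only on the current source symbol and past outputs, and suppose X_0,...,X_n are mutually independent. Then for each i, Y^i ↔ X^i ↔ X_{i+1} forms a Markov chain, and consequently I(X^n ← Y^n) = 0. -/

import Mathlib

open Finset
open scoped Classical

/-- Probability of an event under a pmf `p` on a finite sample space. -/
noncomputable def pr {Ω : Type} [Fintype Ω] (p : Ω → ℝ) (E : Ω → Prop) : ℝ :=
  ∑ ω, if E ω then p ω else 0

/-- Conditional mutual information `I(f; g | h)` of random variables on a finite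
sample space, via `I(A;B|C) = E[log (p(a,b,c) p(c) / (p(a,c) p(b,c)))]`. -/
noncomputable def condMI {Ω A B C : Type} [Fintype Ω] (p : Ω → ℝ)
    (f : Ω → A) (g : Ω → B) (h : Ω → C) : ℝ :=
  ∑ ω, p ω * Real.log
    ((pr p (fun ω' => f ω' = f ω ∧ g ω' = g ω ∧ h ω' = h ω) *
      pr p (fun ω' => h ω' = h ω)) /
     (pr p (fun ω' => f ω' = f ω ∧ h ω' = h ω) *
      pr p (fun ω' => g ω' = g ω ∧ h ω' = h ω)))

/-- Mutual information `I(f; g)`. -/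
noncomputable def mutInfoRV {Ω A B : Type} [Fintype Ω] (p : Ω → ℝ)
    (f : Ω → A) (g : Ω → B) : ℝ :=
  condMI p f g (fun _ => ())

/-- The prefix `Z^i = (Z_0, …, Z_i)` of a sequence-valued random variable. -/
def pref {Ω α : Type} {n : ℕ} (Z : Ω → Fin (n + 1) → α) (i : Fin (n + 1)) :
    Ω → Fin (i.1 + 1) → α :=
  fun ω j => Z ω (Fin.castLE i.isLt j)

/-- The strict prefix `Z^{i-1} = (Z_0, …, Z_{i-1})`. -/
def spref {Ω α : Type} {n : ℕ} (Z : Ω → Fin (n + 1) → α) (i : Fin (n + 1)) :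
    Ω → Fin i.1 → α :=
  fun ω j => Z ω (Fin.castLE i.isLt.le j)

/-- Directed information `I(X^n → Y^n) = ∑_{i=0}^n I(X^i; Y_i | Y^{i-1})`. -/
noncomputable def dirInfo {Ω 𝒳 𝒴 : Type} [Fintype Ω] {n : ℕ} (p : Ω → ℝ)
    (X : Ω → Fin (n + 1) → 𝒳) (Y : Ω → Fin (n + 1) → 𝒴) : ℝ :=
  ∑ i : Fin (n + 1), condMI p (pref X i) (fun ω => Y ω i) (spref Y i)

/-- Reverse directed information `I(X^n ← Y^n) = ∑_{i=0}^n I(Y^{i-1}; X_i | X^{i-1})`. -/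
noncomputable def revDirInfo {Ω 𝒳 𝒴 : Type} [Fintype Ω] {n : ℕ} (p : Ω → ℝ)
    (X : Ω → Fin (n + 1) → 𝒳) (Y : Ω → Fin (n + 1) → 𝒴) : ℝ :=
  ∑ i : Fin (n + 1), condMI p (spref Y i) (fun ω => X ω i) (spref X i)

/-- Conditional independence of `f` and `g` given `h` (a Markov chain `f ↔ h ↔ g`),
stated via factorization of joint probability mass functions. -/
def CondIndep {Ω A B C : Type} [Fintype Ω] (p : Ω → ℝ)
    (f : Ω → A) (g : Ω → B) (h : Ω → C) : Prop :=
  ∀ (a : A) (b : B) (c : C),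
    pr p (fun ω => f ω = a ∧ g ω = b ∧ h ω = c) * pr p (fun ω => h ω = c) =
    pr p (fun ω => f ω = a ∧ h ω = c) * pr p (fun ω => g ω = b ∧ h ω = c)


lemma pr_congr {Ω : Type} [Fintype Ω] (p : Ω → ℝ) {E F : Ω → Prop}
    (h : ∀ ω, E ω ↔ F ω) : pr p E = pr p F := by
  unfold pr
  exact Finset.sum_congr rfl fun ω _ => by simp [h ω]

lemma le_pr {Ω : Type} [Fintype Ω] (p : Ω → ℝ) (hp : ∀ ω, 0 ≤ p ω)
    (E : Ω → Prop) (ω : Ω) (hE : E ω) : p ω ≤ pr p E := by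
  have := Finset.single_le_sum (f := fun ω' => if E ω' then p ω' else 0)
    (fun ω' _ => by split
                    · exact hp ω'
                    · exact le_rfl) (Finset.mem_univ ω)
  simpa [hE, pr] using this

/-- Chain-rule telescoping sum for causal kernels. -/
lemma chain_sum {α : Type} [Fintype α] {m : ℕ}
    (r : (j : Fin m) → α → (Fin j.1 → α) → ℝ)
    (hr : ∀ j past, ∑ v, r j v past = 1) :
    ∀ (d k : ℕ), k + d = m → ∀ w : Fin m → α,
    (∑ y : Fin m → α, if ∀ j : Fin m, j.1 < k → y j = w j
        then ∏ j, r j (y j) (fun t => y (Fin.castLE j.isLt.le t)) else 0)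
    = ∏ j ∈ univ.filter (fun j : Fin m => j.1 < k),
        r j (w j) (fun t => w (Fin.castLE j.isLt.le t)) := by
  intro d
  induction d with
  | zero =>
    intro k hk w
    subst hk
    have hcond : ∀ y : Fin (k+0) → α,
        (∀ j : Fin (k+0), j.1 < k → y j = w j) ↔ y = w := by
      intro y
      constructor
      · intro h; funext j; exact h j (by omega)
      · rintro rfl j _; rfl
    have hfil : (univ.filter (fun j : Fin (k+0) => j.1 < k)) = univ := by
      apply Finset.filter_true_of_mem; intro j _; omega
    simp only [hcond, hfil]
    rw [Finset.sum_ite_eq' univ w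
      (fun y => ∏ j, r j (y j) (fun t => y (Fin.castLE j.isLt.le t)))]
    simp
  | succ d ih =>
    intro k hk w
    have hkm : k < m := by omega
    set kf : Fin m := ⟨k, hkm⟩ with hkf
    have key : ∀ y : Fin m → α,
        (if ∀ j : Fin m, j.1 < k → y j = w j
          then ∏ j, r j (y j) (fun t => y (Fin.castLE j.isLt.le t)) else 0)
        = ∑ v : α, (if ∀ j : Fin m, j.1 < k + 1 → y j = Function.update w kf v j
          then ∏ j, r j (y j) (fun t => y (Fin.castLE j.isLt.le t)) else 0) := by
      intro y
      by_cases hP : ∀ j : Fin m, j.1 < k → y j = w j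
      · have hcond : ∀ v : α,
            (∀ j : Fin m, j.1 < k + 1 → y j = Function.update w kf v j) ↔ v = y kf := by
          intro v
          constructor
          · intro h
            have := h kf (Nat.lt_succ_self k)
            simp only [Function.update_self] at this
            exact this.symm
          · rintro rfl j hj
            rcases Nat.lt_succ_iff_lt_or_eq.mp hj with hj' | hj'
            · rw [Function.update_of_ne (by intro hh; rw [hh] at hj'; exact absurd hj' (lt_irrefl k))]
              exact hP j hj'
            · have : j = kf := Fin.ext hj'
              subst this
              simp [Function.update_self]
        simp only [hcond]
        rw [if_pos hP, Finset.sum_ite_eq' univ (y kf)]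
        simp
      · rw [if_neg hP]
        symm
        apply Finset.sum_eq_zero
        intro v _
        rw [if_neg]
        intro h
        apply hP
        intro j hj
        have := h j (by omega)
        rwa [Function.update_of_ne (by intro hh; rw [hh] at hj; exact absurd hj (lt_irrefl k))] at this
    calc (∑ y : Fin m → α, if ∀ j : Fin m, j.1 < k → y j = w j
            then ∏ j, r j (y j) (fun t => y (Fin.castLE j.isLt.le t)) else 0)
        = ∑ y : Fin m → α, ∑ v : α, (if ∀ j : Fin m, j.1 < k + 1 → y j = Function.update w kf v j
            then ∏ j, r j (y j) (fun t => y (Fin.castLE j.isLt.le t)) else 0) := by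
          exact Finset.sum_congr rfl fun y _ => key y
      _ = ∑ v : α, ∑ y : Fin m → α, (if ∀ j : Fin m, j.1 < k + 1 → y j = Function.update w kf v j
            then ∏ j, r j (y j) (fun t => y (Fin.castLE j.isLt.le t)) else 0) := Finset.sum_comm
      _ = ∑ v : α, ∏ j ∈ univ.filter (fun j : Fin m => j.1 < k + 1),
            r j (Function.update w kf v j) (fun t => Function.update w kf v (Fin.castLE j.isLt.le t)) := by
          exact Finset.sum_congr rfl fun v _ => ih (k+1) (by omega) _
      _ = ∏ j ∈ univ.filter (fun j : Fin m => j.1 < k),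
            r j (w j) (fun t => w (Fin.castLE j.isLt.le t)) := by
          have hfil : (univ.filter (fun j : Fin m => j.1 < k + 1))
              = insert kf (univ.filter (fun j : Fin m => j.1 < k)) := by
            ext j
            simp only [Finset.mem_filter, Finset.mem_univ, true_and, Finset.mem_insert]
            constructor
            · intro h
              rcases Nat.lt_succ_iff_lt_or_eq.mp h with h' | h'
              · exact Or.inr h'
              · exact Or.inl (Fin.ext h')
            · rintro (rfl | h)
              · exact Nat.lt_succ_self k
              · omega
          have hnot : kf ∉ univ.filter (fun j : Fin m => j.1 < k) := by
            simp [hkf]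
          have hpast : ∀ v (t : Fin kf.1),
              Function.update w kf v (Fin.castLE kf.isLt.le t) = w (Fin.castLE kf.isLt.le t) := by
            intro v t
            apply Function.update_of_ne
            intro hh
            have : (Fin.castLE kf.isLt.le t).1 = kf.1 := by rw [hh]
            simp at this
            omega
          have hterm : ∀ v, ∏ j ∈ univ.filter (fun j : Fin m => j.1 < k + 1),
              r j (Function.update w kf v j) (fun t => Function.update w kf v (Fin.castLE j.isLt.le t))
              = r kf v (fun t => w (Fin.castLE kf.isLt.le t)) *
                ∏ j ∈ univ.filter (fun j : Fin m => j.1 < k),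
                  r j (w j) (fun t => w (Fin.castLE j.isLt.le t)) := by
            intro v
            rw [hfil, Finset.prod_insert hnot]
            congr 1
            · rw [Function.update_self]
              congr 1
              funext t
              exact hpast v t
            · apply Finset.prod_congr rfl
              intro j hj
              simp only [Finset.mem_filter] at hj
              have hjk : j.1 < k := hj.2
              have hne : j ≠ kf := by intro hh; rw [hh] at hjk; simp [hkf] at hjk
              rw [Function.update_of_ne hne]
              congr 1
              funext t
              apply Function.update_of_ne
              intro hh
              have : (Fin.castLE j.isLt.le t).1 = kf.1 := by rw [hh]
              simp [hkf] at this
              omega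
          simp only [hterm]
          rw [← Finset.sum_mul, hr kf _, one_mul]

lemma condMI_eq_zero_of_condIndep {Ω A B C : Type} [Fintype Ω] (p : Ω → ℝ)
    (hp : ∀ ω, 0 ≤ p ω) (f : Ω → A) (g : Ω → B) (h : Ω → C)
    (hci : CondIndep p f g h) : condMI p f g h = 0 := by
  unfold condMI
  apply Finset.sum_eq_zero
  intro ω _
  rcases eq_or_lt_of_le (hp ω) with h0 | h0
  · rw [← h0, zero_mul]
  · have hfh : 0 < pr p (fun ω' => f ω' = f ω ∧ h ω' = h ω) :=
      lt_of_lt_of_le h0 (le_pr p hp _ ω ⟨rfl, rfl⟩)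
    have hgh : 0 < pr p (fun ω' => g ω' = g ω ∧ h ω' = h ω) :=
      lt_of_lt_of_le h0 (le_pr p hp _ ω ⟨rfl, rfl⟩)
    rw [hci (f ω) (g ω) (h ω), div_self (ne_of_gt (mul_pos hfh hgh)), Real.log_one, mul_zero]

lemma spref_eq_iff {Ω α : Type} {n : ℕ} (Z : Ω → Fin (n + 1) → α) (i : Fin (n + 1))
    (v : Fin i.1 → α) (w : Fin (n + 1) → α)
    (hw : ∀ (j : Fin (n + 1)) (h : j.1 < i.1), w j = v ⟨j.1, h⟩) (ω : Ω) :
    spref Z i ω = v ↔ ∀ j : Fin (n + 1), j.1 < i.1 → Z ω j = w j := by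
  constructor
  · intro h j hj
    have h2 := congrFun h ⟨j.1, hj⟩
    rw [hw j hj]
    exact h2
  · intro h
    funext t
    exact (h (Fin.castLE i.isLt.le t) t.2).trans (hw _ t.2)

lemma spref_snoc_eq_iff {Ω α : Type} {n : ℕ} (Z : Ω → Fin (n + 1) → α) (i : Fin (n + 1))
    (v : Fin i.1 → α) (a : α) (w : Fin (n + 1) → α)
    (hw : ∀ (j : Fin (n + 1)) (h : j.1 < i.1), w j = v ⟨j.1, h⟩) (hwa : w i = a) (ω : Ω) :
    (Z ω i = a ∧ spref Z i ω = v) ↔ ∀ j : Fin (n + 1), j.1 < i.1 + 1 → Z ω j = w j := by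
  rw [spref_eq_iff Z i v w hw]
  constructor
  · rintro ⟨h1, h2⟩ j hj
    rcases Nat.lt_succ_iff_lt_or_eq.mp hj with hj' | hj'
    · exact h2 j hj'
    · have hji : j = i := Fin.ext hj'
      subst hji
      rw [hwa]
      exact h1
  · intro h
    refine ⟨?_, fun j hj => h j (by omega)⟩
    rw [← hwa]
    exact h i (Nat.lt_succ_self _)

lemma pr_prefix_eq {𝒳 𝒴 : Type} [Fintype 𝒳] [Fintype 𝒴] {n : ℕ}
    (μ : Fin (n + 1) → 𝒳 → ℝ)
    (hμ : ∀ i, (∀ x, 0 ≤ μ i x) ∧ ∑ x, μ i x = 1)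
    (q : (i : Fin (n + 1)) → 𝒴 → (Fin i.1 → 𝒴) → 𝒳 → ℝ)
    (hq : ∀ i ypast x, (∀ y, 0 ≤ q i y ypast x) ∧ ∑ y, q i y ypast x = 1)
    (p : (Fin (n + 1) → 𝒳) × (Fin (n + 1) → 𝒴) → ℝ)
    (hp : ∀ z, p z =
      (∏ i, μ i (z.1 i)) *
      ∏ i, q i (z.2 i) (fun j : Fin i.1 => z.2 (Fin.castLE i.isLt.le j)) (z.1 i))
    (kx ky : ℕ) (hyx : ky ≤ kx) (hxn : kx ≤ n + 1)
    (w1 : Fin (n + 1) → 𝒳) (w2 : Fin (n + 1) → 𝒴) :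
    pr p (fun z => (∀ j : Fin (n + 1), j.1 < ky → z.2 j = w2 j) ∧
                   (∀ j : Fin (n + 1), j.1 < kx → z.1 j = w1 j))
    = (∏ j ∈ univ.filter (fun j : Fin (n + 1) => j.1 < kx), μ j (w1 j)) *
      ∏ j ∈ univ.filter (fun j : Fin (n + 1) => j.1 < ky),
        q j (w2 j) (fun t => w2 (Fin.castLE j.isLt.le t)) (w1 j) := by
  unfold pr
  rw [Fintype.sum_prod_type]
  have big : (∑ x : Fin (n + 1) → 𝒳, ∑ y : Fin (n + 1) → 𝒴,
      if (∀ j : Fin (n + 1), j.1 < ky → y j = w2 j) ∧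
         (∀ j : Fin (n + 1), j.1 < kx → x j = w1 j) then p (x, y) else 0)
      = (∏ j ∈ univ.filter (fun j : Fin (n + 1) => j.1 < kx), μ j (w1 j)) *
        ∏ j ∈ univ.filter (fun j : Fin (n + 1) => j.1 < ky),
          q j (w2 j) (fun t => w2 (Fin.castLE j.isLt.le t)) (w1 j) := by
    have step1 : ∀ x : Fin (n + 1) → 𝒳,
        (∑ y : Fin (n + 1) → 𝒴, if (∀ j : Fin (n + 1), j.1 < ky → y j = w2 j) ∧
            (∀ j : Fin (n + 1), j.1 < kx → x j = w1 j) then p (x, y) else 0)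
        = (if (∀ j : Fin (n + 1), j.1 < kx → x j = w1 j) then (∏ i, μ i (x i)) else 0) *
          ∏ j ∈ univ.filter (fun j : Fin (n + 1) => j.1 < ky),
            q j (w2 j) (fun t => w2 (Fin.castLE j.isLt.le t)) (x j) := by
      intro x
      by_cases hx : (∀ j : Fin (n + 1), j.1 < kx → x j = w1 j)
      · rw [if_pos hx]
        calc (∑ y : Fin (n + 1) → 𝒴, if (∀ j : Fin (n + 1), j.1 < ky → y j = w2 j) ∧
                (∀ j : Fin (n + 1), j.1 < kx → x j = w1 j) then p (x, y) else 0)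
            = ∑ y : Fin (n + 1) → 𝒴, (∏ i, μ i (x i)) *
                (if (∀ j : Fin (n + 1), j.1 < ky → y j = w2 j)
                  then ∏ j, q j (y j) (fun t => y (Fin.castLE j.isLt.le t)) (x j) else 0) := by
              apply Finset.sum_congr rfl
              intro y _
              by_cases hA : (∀ j : Fin (n + 1), j.1 < ky → y j = w2 j)
              · rw [if_pos ⟨hA, hx⟩, if_pos hA, hp]
              · rw [if_neg (fun hc => hA hc.1), if_neg hA, mul_zero]
          _ = (∏ i, μ i (x i)) * ∑ y : Fin (n + 1) → 𝒴,
                (if (∀ j : Fin (n + 1), j.1 < ky → y j = w2 j)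
                  then ∏ j, q j (y j) (fun t => y (Fin.castLE j.isLt.le t)) (x j) else 0) := by
              rw [Finset.mul_sum]
          _ = (∏ i, μ i (x i)) * ∏ j ∈ univ.filter (fun j : Fin (n + 1) => j.1 < ky),
                q j (w2 j) (fun t => w2 (Fin.castLE j.isLt.le t)) (x j) := by
              rw [chain_sum (fun j v past => q j v past (x j))
                (fun j past => (hq j past (x j)).2) (n + 1 - ky) ky (by omega) w2]
      · rw [if_neg hx, zero_mul]
        apply Finset.sum_eq_zero
        intro y _
        rw [if_neg (fun hc => hx hc.2)]
    have step2 : ∀ x : Fin (n + 1) → 𝒳,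
        (if (∀ j : Fin (n + 1), j.1 < kx → x j = w1 j) then (∏ i, μ i (x i)) else 0) *
          (∏ j ∈ univ.filter (fun j : Fin (n + 1) => j.1 < ky),
            q j (w2 j) (fun t => w2 (Fin.castLE j.isLt.le t)) (x j))
        = (if (∀ j : Fin (n + 1), j.1 < kx → x j = w1 j) then (∏ i, μ i (x i)) else 0) *
          ∏ j ∈ univ.filter (fun j : Fin (n + 1) => j.1 < ky),
            q j (w2 j) (fun t => w2 (Fin.castLE j.isLt.le t)) (w1 j) := by
      intro x
      by_cases hx : (∀ j : Fin (n + 1), j.1 < kx → x j = w1 j)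
      · rw [if_pos hx]
        congr 1
        apply Finset.prod_congr rfl
        intro j hj
        simp only [Finset.mem_filter] at hj
        rw [hx j (lt_of_lt_of_le hj.2 hyx)]
      · rw [if_neg hx, zero_mul, zero_mul]
    refine Eq.trans (Finset.sum_congr rfl fun x _ => (step1 x).trans (step2 x)) ?_
    rw [← Finset.sum_mul]
    congr 1
    exact chain_sum (fun j v (_ : Fin j.1 → 𝒳) => μ j v)
      (fun j past => (hμ j).2) (n + 1 - kx) kx (by omega) w1
  refine Eq.trans (Finset.sum_congr rfl fun x _ =>
    Finset.sum_congr rfl fun y _ => ?_) big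
  congr 1

/-- if the joint law is `μ(x^n) ∏_i q_i(y_i | y^{i-1}, x_i)` with
`μ` a product measure (i.e. `X_0, …, X_n` mutually independent) and kernels
depending only on the current source symbol and past outputs, then each Markov
chain `Y^i ↔ X^i ↔ X_{i+1}` holds and `I(X^n ← Y^n) = 0`. -/
theorem markov_and_revDirInfo_zero_of_causal_kernels_indep_source
    {𝒳 𝒴 : Type} [Fintype 𝒳] [Fintype 𝒴] {n : ℕ}
    (μ : Fin (n + 1) → 𝒳 → ℝ)
    (hμ : ∀ i, (∀ x, 0 ≤ μ i x) ∧ ∑ x, μ i x = 1)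
    (q : (i : Fin (n + 1)) → 𝒴 → (Fin i.1 → 𝒴) → 𝒳 → ℝ)
    (hq : ∀ i ypast x, (∀ y, 0 ≤ q i y ypast x) ∧ ∑ y, q i y ypast x = 1)
    (p : (Fin (n + 1) → 𝒳) × (Fin (n + 1) → 𝒴) → ℝ)
    (hp : ∀ z, p z =
      (∏ i, μ i (z.1 i)) *
      ∏ i, q i (z.2 i) (fun j : Fin i.1 => z.2 (Fin.castLE i.isLt.le j)) (z.1 i)) :
    (∀ i : Fin n,
      CondIndep p (pref (fun z : (Fin (n + 1) → 𝒳) × (Fin (n + 1) → 𝒴) => z.2) i.castSucc)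
        (fun z => z.1 i.succ)
        (pref (fun z : (Fin (n + 1) → 𝒳) × (Fin (n + 1) → 𝒴) => z.1) i.castSucc)) ∧
    revDirInfo p (fun z => z.1) (fun z => z.2) = 0 := by
  have hpnn : ∀ z, 0 ≤ p z := by
    intro z
    rw [hp z]
    apply mul_nonneg
    · exact Finset.prod_nonneg fun i _ => (hμ i).1 _
    · exact Finset.prod_nonneg fun i _ => (hq i _ _).1 _
  have hX : Nonempty 𝒳 := by
    rcases isEmpty_or_nonempty 𝒳 with h | h
    · exfalso
      have h2 := (hμ ⟨0, Nat.succ_pos n⟩).2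
      simp only [Finset.univ_eq_empty, Finset.sum_empty] at h2
      norm_num at h2
    · exact h
  have hY : Nonempty 𝒴 := by
    rcases isEmpty_or_nonempty 𝒴 with h | h
    · exfalso
      have h2 := (hq ⟨0, Nat.succ_pos n⟩ Fin.elim0 (Classical.arbitrary 𝒳)).2
      simp only [Finset.univ_eq_empty, Finset.sum_empty] at h2
      norm_num at h2
    · exact h
  have core : ∀ i : Fin (n + 1),
      CondIndep p (spref (fun z : (Fin (n + 1) → 𝒳) × (Fin (n + 1) → 𝒴) => z.2) i)
        (fun z => z.1 i)
        (spref (fun z : (Fin (n + 1) → 𝒳) × (Fin (n + 1) → 𝒴) => z.1) i) := by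
    intro i yp a xp
    set w1 : Fin (n + 1) → 𝒳 :=
      fun j => if h : j.1 < i.1 then xp ⟨j.1, h⟩ else Classical.arbitrary 𝒳 with hw1
    set w1' : Fin (n + 1) → 𝒳 :=
      fun j => if h : j.1 < i.1 then xp ⟨j.1, h⟩ else a with hw1'
    set w2 : Fin (n + 1) → 𝒴 :=
      fun j => if h : j.1 < i.1 then yp ⟨j.1, h⟩ else Classical.arbitrary 𝒴 with hw2
    have hw1h : ∀ (j : Fin (n + 1)) (h : j.1 < i.1), w1 j = xp ⟨j.1, h⟩ := by
      intro j h; rw [hw1]; exact dif_pos h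
    have hw1'h : ∀ (j : Fin (n + 1)) (h : j.1 < i.1), w1' j = xp ⟨j.1, h⟩ := by
      intro j h; rw [hw1']; exact dif_pos h
    have hw1'a : w1' i = a := by
      rw [hw1']; exact dif_neg (lt_irrefl i.1)
    have hw2h : ∀ (j : Fin (n + 1)) (h : j.1 < i.1), w2 j = yp ⟨j.1, h⟩ := by
      intro j h; rw [hw2]; exact dif_pos h
    have e1 : pr p (fun z => spref (fun z : (Fin (n + 1) → 𝒳) × (Fin (n + 1) → 𝒴) => z.2) i z = yp ∧
          (fun z : (Fin (n + 1) → 𝒳) × (Fin (n + 1) → 𝒴) => z.1 i) z = a ∧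
          spref (fun z : (Fin (n + 1) → 𝒳) × (Fin (n + 1) → 𝒴) => z.1) i z = xp)
        = pr p (fun z => (∀ j : Fin (n + 1), j.1 < i.1 → z.2 j = w2 j) ∧
                         (∀ j : Fin (n + 1), j.1 < i.1 + 1 → z.1 j = w1' j)) := by
      apply pr_congr
      intro z
      rw [← spref_eq_iff (fun z : (Fin (n + 1) → 𝒳) × (Fin (n + 1) → 𝒴) => z.2) i yp w2 hw2h z,
        ← spref_snoc_eq_iff (fun z : (Fin (n + 1) → 𝒳) × (Fin (n + 1) → 𝒴) => z.1) i xp a w1' hw1'h hw1'a z]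
    have e2 : pr p (fun z => spref (fun z : (Fin (n + 1) → 𝒳) × (Fin (n + 1) → 𝒴) => z.1) i z = xp)
        = pr p (fun z => (∀ j : Fin (n + 1), j.1 < 0 → z.2 j = w2 j) ∧
                         (∀ j : Fin (n + 1), j.1 < i.1 → z.1 j = w1 j)) := by
      apply pr_congr
      intro z
      rw [← spref_eq_iff (fun z : (Fin (n + 1) → 𝒳) × (Fin (n + 1) → 𝒴) => z.1) i xp w1 hw1h z]
      constructor
      · intro h; exact ⟨fun j hj => absurd hj (Nat.not_lt_zero _), h⟩
      · exact fun h => h.2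
    have e3 : pr p (fun z => spref (fun z : (Fin (n + 1) → 𝒳) × (Fin (n + 1) → 𝒴) => z.2) i z = yp ∧
          spref (fun z : (Fin (n + 1) → 𝒳) × (Fin (n + 1) → 𝒴) => z.1) i z = xp)
        = pr p (fun z => (∀ j : Fin (n + 1), j.1 < i.1 → z.2 j = w2 j) ∧
                         (∀ j : Fin (n + 1), j.1 < i.1 → z.1 j = w1 j)) := by
      apply pr_congr
      intro z
      rw [← spref_eq_iff (fun z : (Fin (n + 1) → 𝒳) × (Fin (n + 1) → 𝒴) => z.2) i yp w2 hw2h z,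
        ← spref_eq_iff (fun z : (Fin (n + 1) → 𝒳) × (Fin (n + 1) → 𝒴) => z.1) i xp w1 hw1h z]
    have e4 : pr p (fun z => (fun z : (Fin (n + 1) → 𝒳) × (Fin (n + 1) → 𝒴) => z.1 i) z = a ∧
          spref (fun z : (Fin (n + 1) → 𝒳) × (Fin (n + 1) → 𝒴) => z.1) i z = xp)
        = pr p (fun z => (∀ j : Fin (n + 1), j.1 < 0 → z.2 j = w2 j) ∧
                         (∀ j : Fin (n + 1), j.1 < i.1 + 1 → z.1 j = w1' j)) := by
      apply pr_congr
      intro z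
      rw [← spref_snoc_eq_iff (fun z : (Fin (n + 1) → 𝒳) × (Fin (n + 1) → 𝒴) => z.1) i xp a w1' hw1'h hw1'a z]
      constructor
      · intro h; exact ⟨fun j hj => absurd hj (Nat.not_lt_zero _), h⟩
      · exact fun h => h.2
    rw [e1, e2, e3, e4]
    rw [pr_prefix_eq μ hμ q hq p hp (i.1 + 1) i.1 (Nat.le_succ _) i.isLt w1' w2,
      pr_prefix_eq μ hμ q hq p hp i.1 0 (Nat.zero_le _) i.isLt.le w1 w2,
      pr_prefix_eq μ hμ q hq p hp i.1 i.1 le_rfl i.isLt.le w1 w2,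
      pr_prefix_eq μ hμ q hq p hp (i.1 + 1) 0 (Nat.zero_le _) i.isLt w1' w2]
    have hfil0 : (univ.filter (fun j : Fin (n + 1) => j.1 < 0)) = ∅ := by
      apply Finset.filter_false_of_mem
      intro j _
      exact Nat.not_lt_zero _
    have hQ : (∏ j ∈ univ.filter (fun j : Fin (n + 1) => j.1 < i.1),
          q j (w2 j) (fun t => w2 (Fin.castLE j.isLt.le t)) (w1' j))
        = ∏ j ∈ univ.filter (fun j : Fin (n + 1) => j.1 < i.1),
          q j (w2 j) (fun t => w2 (Fin.castLE j.isLt.le t)) (w1 j) := by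
      apply Finset.prod_congr rfl
      intro j hj
      simp only [Finset.mem_filter] at hj
      rw [hw1'h j hj.2, hw1h j hj.2]
    rw [hQ, hfil0]
    simp only [Finset.prod_empty]
    ring
  constructor
  · intro i
    exact core i.succ
  · unfold revDirInfo
    apply Finset.sum_eq_zero
    intro i _
    exact condMI_eq_zero_of_condIndep p hpnn _ _ _ (core i)
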